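/- Suppose 2j − k ≤ m ≤ j−1 and let M be the centre of an (m,j)-star S of size r (r distinct j-sets pairwise intersecting exactly in the common m-set M). If S ⊆ A_t in the (r, A_0)-infection process on K_n^k (with n sufficiently large), then every j-set containing M is infected at time t+1, i.e., M* ⊆ A_{t+1}. -/

import Mathlib

open Finset

open Classical in
noncomputable def bootStep (V : Finset ℕ) (E : Finset (Finset ℕ)) (j r : ℕ)
    (A : Finset (Finset ℕ)) : Finset (Finset ℕ) :=
  A ∪ (V.powersetCard j).filter (fun J =>
    ∃ K : Fin r → Finset ℕ, ∃ Js : Fin r → Finset ℕ,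
      Function.Injective K ∧ Function.Injective Js ∧
      ∀ i : Fin r, K i ∈ E ∧ Js i ∈ A ∧ Js i ∪ J ⊆ K i)

/-- The infected sets at time `t` of the bootstrap percolation process on a hypergraph
with vertex set `V`, edge set `E`, evolving on `j`-sets with infection threshold `r`. -/
noncomputable def bootProc (V : Finset ℕ) (E : Finset (Finset ℕ)) (j r : ℕ)
    (A0 : Finset (Finset ℕ)) (t : ℕ) : Finset (Finset ℕ) :=
  (bootStep V E j r)^[t] A0

/-- The process on the complete `k`-uniform hypergraph on `V`. -/
noncomputable def compProc (V : Finset ℕ) (k j r : ℕ)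
    (A0 : Finset (Finset ℕ)) (t : ℕ) : Finset (Finset ℕ) :=
  bootProc V (V.powersetCard k) j r A0 t

/-- `A0` is contagious: eventually all `j`-sets of `V` are infected. -/
def Percolates (V : Finset ℕ) (k j r : ℕ) (A0 : Finset (Finset ℕ)) : Prop :=
  ∃ t, compProc V k j r A0 t = V.powersetCard j

/-- `ℓ_n(k,j,r)`: minimum size of a contagious `j`-configuration in `K_n^k`. -/
noncomputable def ellMin (n k j r : ℕ) : ℕ :=
  sInf {m | ∃ A0 : Finset (Finset ℕ), A0 ⊆ (range n).powersetCard j ∧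
    A0.card = m ∧ Percolates (range n) k j r A0}

open Classical in
/-- The extension set of a `(k-1)`-set `J` with respect to configuration `C` in the
complete `k`-uniform hypergraph on `V`. -/
noncomputable def extSet (V : Finset ℕ) (k : ℕ) (C : Finset (Finset ℕ))
    (J : Finset ℕ) : Finset ℕ :=
  V.filter (fun v => ∃ J' ∈ C, J' ≠ J ∧ J' ⊆ insert v J ∧ insert v J ∈ V.powersetCard k)

/-- An (m,j)-star with centre M: distinct j-sets every two of which intersect
precisely in the common m-set M. -/
def IsStar (m j : ℕ) (M : Finset ℕ) (S : Finset (Finset ℕ)) : Prop :=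
  M.card = m ∧ (∀ J ∈ S, J.card = j ∧ M ⊆ J) ∧
  ∀ J1 ∈ S, ∀ J2 ∈ S, J1 ≠ J2 → J1 ∩ J2 = M

theorem stmt4 (n k j r m t : ℕ) (hj : 1 ≤ j) (hjk : j ≤ k - 1) (hr : 1 ≤ r)
    (hm1 : 2 * j ≤ k + m) (hm2 : m ≤ j - 1) (hn : k + r - 1 ≤ n)
    (M : Finset ℕ) (S : Finset (Finset ℕ)) (hSsub : ∀ J ∈ S, J ⊆ range n)
    (hstar : IsStar m j M S) (hsize : S.card = r)
    (A0 : Finset (Finset ℕ)) (hA0 : A0 ⊆ (range n).powersetCard j)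
    (hinf : S ⊆ compProc (range n) k j r A0 t) :
    ∀ J ∈ (range n).powersetCard j, M ⊆ J → J ∈ compProc (range n) k j r A0 (t + 1) := by
  classical
  intro J hJ hMJ
  obtain ⟨hMcard, hSprop, hSint⟩ := hstar
  obtain ⟨hJrange, hJcard⟩ := Finset.mem_powersetCard.mp hJ
  have hk2 : 2 ≤ k := by omega
  have hkn : k ≤ n := by omega
  -- enumeration of S
  let e := S.equivFin
  let Js : Fin r → Finset ℕ := fun i => ↑(e.symm (Fin.cast hsize.symm i))
  have hJsS : ∀ i, Js i ∈ S := fun i => (e.symm _).2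
  have hJsinj : Function.Injective Js := by
    intro a b hab
    have h1 : e.symm (Fin.cast hsize.symm a) = e.symm (Fin.cast hsize.symm b) :=
      Subtype.ext hab
    have h2 := e.symm.injective h1
    exact Fin.ext (by simpa using congrArg Fin.val h2)
  have hJscard : ∀ i, (Js i).card = j := fun i => (hSprop _ (hJsS i)).1
  have hJsrange : ∀ i, Js i ⊆ range n := fun i => hSsub _ (hJsS i)
  have hUrange : ∀ i, Js i ∪ J ⊆ range n := fun i =>
    Finset.union_subset (hJsrange i) hJrange
  have hUcard : ∀ i, (Js i ∪ J).card ≤ k := by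
    intro i
    have h1 := Finset.card_union_add_card_inter (Js i) J
    have h2 : m ≤ (Js i ∩ J).card := by
      rw [← hMcard]
      exact Finset.card_le_card (Finset.subset_inter (hSprop _ (hJsS i)).2 hMJ)
    have := hJscard i
    omega
  -- distinctness of unions
  have hunion_inj : ∀ a b, Js a ∪ J = Js b ∪ J → a = b := by
    intro a b hab
    by_contra hne
    have hne' : Js a ≠ Js b := fun h => hne (hJsinj h)
    have hint : Js a ∩ Js b = M := hSint _ (hJsS a) _ (hJsS b) hne'
    have hsubJ : ∀ c d : Fin r, Js c ∩ Js d = M → Js c ∪ J = Js d ∪ J → Js c = J := by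
      intro c d hcd hu
      apply Finset.eq_of_subset_of_card_le _ (by rw [hJscard c, hJcard])
      intro x hx
      have : x ∈ Js d ∪ J := by rw [← hu]; exact Finset.mem_union_left _ hx
      rcases Finset.mem_union.mp this with hx' | hx'
      · have : x ∈ M := by rw [← hcd]; exact Finset.mem_inter.mpr ⟨hx, hx'⟩
        exact hMJ this
      · exact hx'
    have h1 : Js a = J := hsubJ a b hint hab
    have h2 : Js b = J := hsubJ b a (by rwa [Finset.inter_comm]) hab.symm
    exact hne' (h1.trans h2.symm)
  -- the candidate k-sets
  set T : Fin r → Finset (Finset ℕ) :=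
    fun i => ((range n).powersetCard k).filter (fun K => Js i ∪ J ⊆ K) with hT
  have hTmem : ∀ i K, K ∈ T i ↔ (K ∈ (range n).powersetCard k ∧ Js i ∪ J ⊆ K) := by
    intro i K; simp [hT]
  have hTbig : ∀ i, (Js i ∪ J).card < k → r ≤ (T i).card := by
    intro i hu
    set U := Js i ∪ J with hU
    set C := range n \ U with hC
    have hCcard : C.card = n - U.card := by
      rw [hC, Finset.card_sdiff_of_subset (hUrange i), Finset.card_range]
    obtain ⟨X, hXC, hXcard⟩ : ∃ X ⊆ C, X.card = k - U.card - 1 :=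
      Finset.exists_subset_card_eq (by omega)
    have hWcard : (C \ X).card = n - U.card - (k - U.card - 1) := by
      rw [Finset.card_sdiff_of_subset hXC, hCcard, hXcard]
    have hrW : r ≤ (C \ X).card := by omega
    have hUXd : Disjoint U X := by
      refine Finset.disjoint_left.mpr ?_
      intro x hxU hxX
      exact (Finset.mem_sdiff.mp (hXC hxX)).2 hxU
    have hUXcard : (U ∪ X).card = k - 1 := by
      rw [Finset.card_union_of_disjoint hUXd, hXcard]; omega
    apply le_trans hrW
    apply Finset.card_le_card_of_injOn (fun v => insert v (U ∪ X))
    · intro v hv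
      have hv' := Finset.mem_sdiff.mp hv
      have hvC := Finset.mem_sdiff.mp hv'.1
      have hvnUX : v ∉ U ∪ X := by
        intro h
        rcases Finset.mem_union.mp h with h | h
        · exact hvC.2 h
        · exact hv'.2 h
      simp only [Finset.mem_coe]
      rw [hTmem]
      constructor
      · rw [Finset.mem_powersetCard]
        constructor
        · apply Finset.insert_subset hvC.1
          apply Finset.union_subset (hUrange i)
          intro x hx
          exact (Finset.mem_sdiff.mp (hXC hx)).1
        · rw [Finset.card_insert_of_notMem hvnUX, hUXcard]; omega
      · exact (Finset.subset_union_left).trans (Finset.subset_insert _ _)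
    · intro a ha b hb hab
      have ha' := Finset.mem_sdiff.mp ha
      have haC := Finset.mem_sdiff.mp ha'.1
      have hanUX : a ∉ U ∪ X := by
        intro h
        rcases Finset.mem_union.mp h with h | h
        · exact haC.2 h
        · exact ha'.2 h
      have hab' : insert a (U ∪ X) = insert b (U ∪ X) := hab
      have : a ∈ insert b (U ∪ X) := by
        rw [← hab']; exact Finset.mem_insert_self _ _
      rcases Finset.mem_insert.mp this with h | h
      · exact h
      · exact absurd h hanUX
  -- Hall condition
  have hall : ∀ s : Finset (Fin r), s.card ≤ (s.biUnion T).card := by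
    intro s
    by_cases hex : ∃ i ∈ s, (Js i ∪ J).card < k
    · obtain ⟨i, his, hi⟩ := hex
      calc s.card ≤ Fintype.card (Fin r) := Finset.card_le_univ s
        _ = r := Fintype.card_fin r
        _ ≤ (T i).card := hTbig i hi
        _ ≤ (s.biUnion T).card :=
            Finset.card_le_card (Finset.subset_biUnion_of_mem T his)
    · push_neg at hex
      apply Finset.card_le_card_of_injOn (fun i => Js i ∪ J)
      · intro i his
        apply Finset.mem_biUnion.mpr ⟨i, his, ?_⟩
        rw [hTmem]
        refine ⟨Finset.mem_powersetCard.mpr ⟨hUrange i, ?_⟩, Finset.Subset.refl _⟩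
        have := hex i his
        have := hUcard i
        show (Js i ∪ J).card = k
        omega
      · intro a _ b _ hab
        exact hunion_inj a b hab
  obtain ⟨f, hfinj, hfT⟩ :=
    (Finset.all_card_le_biUnion_card_iff_exists_injective T).mp hall
  -- conclude
  have hstep : compProc (range n) k j r A0 (t + 1) =
      bootStep (range n) ((range n).powersetCard k) j r
        (compProc (range n) k j r A0 t) := by
    simp [compProc, bootProc, Function.iterate_succ_apply']
  rw [hstep]
  unfold bootStep
  rw [Finset.mem_union]
  right
  rw [Finset.mem_filter]
  refine ⟨hJ, f, Js, hfinj, hJsinj, fun i => ?_⟩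
  have := (hTmem i (f i)).mp (hfT i)
  exact ⟨this.1, hinf (hJsS i), this.2⟩
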